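/- Let f : [0,∞) → ℝ be continuous with f(0) = 0 and set g = Ψf. Then for all real numbers 0 ≤ a < b, the following are equivalent: (i) g(a) = g(b) = 0 and g(t) > 0 for all t ∈ (a,b); (ii) f(a) = f(b) = min{f(t) : 0 ≤ t ≤ b} and f(t) > f(a) for all t ∈ (a,b). In other words, the excursion intervals of g above 0 are exactly the excursion intervals of f above its running minimum; in particular the multiset of excursion lengths of f above its running minimum coincides with the multiset of excursion lengths of g above 0. -/

import Mathlib

open Filter Topology


/-- For a continuous `f : [0,∞) → ℝ` with `f 0 = 0` and `g = Ψ f`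
(where `Ψ f x = f x − min {f y : 0 ≤ y ≤ x}`), for all `0 ≤ a < b`:
`[a,b]` is an excursion interval of `g` above `0` iff it is an excursion interval
of `f` above its running minimum. -/
theorem stmt0 (f : ℝ → ℝ) (hf : ContinuousOn f (Set.Ici 0)) (hf0 : f 0 = 0)
    (g : ℝ → ℝ) (hg : ∀ x, 0 ≤ x → g x = f x - sInf (f '' Set.Icc 0 x))
    (a b : ℝ) (ha : 0 ≤ a) (hab : a < b) :
    (g a = 0 ∧ g b = 0 ∧ ∀ t ∈ Set.Ioo a b, 0 < g t) ↔
    (f a = f b ∧ f a = sInf (f '' Set.Icc 0 b) ∧ ∀ t ∈ Set.Ioo a b, f a < f t) := by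
  have hb : (0:ℝ) ≤ b := ha.trans hab.le
  set m : ℝ → ℝ := fun x => sInf (f '' Set.Icc 0 x) with hm
  -- basic facts about m
  have hcomp : ∀ x : ℝ, 0 ≤ x → IsCompact (f '' Set.Icc 0 x) := by
    intro x hx
    exact isCompact_Icc.image_of_continuousOn (hf.mono (fun y hy => hy.1))
  have hne : ∀ x : ℝ, 0 ≤ x → (f '' Set.Icc 0 x).Nonempty := by
    intro x hx
    exact ⟨f 0, 0, ⟨le_refl 0, hx⟩, rfl⟩
  have hmem : ∀ x : ℝ, 0 ≤ x → m x ∈ f '' Set.Icc 0 x := by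
    intro x hx
    exact (hcomp x hx).sInf_mem (hne x hx)
  have hle : ∀ x : ℝ, 0 ≤ x → ∀ y ∈ Set.Icc (0:ℝ) x, m x ≤ f y := by
    intro x hx y hy
    exact csInf_le (hcomp x hx).bddBelow ⟨y, hy, rfl⟩
  have hmono : ∀ x y : ℝ, 0 ≤ x → x ≤ y → m y ≤ m x := by
    intro x y hx hxy
    exact csInf_le_csInf (hcomp y (hx.trans hxy)).bddBelow (hne x hx)
      (Set.image_mono (Set.Icc_subset_Icc le_rfl hxy))
  constructor
  · rintro ⟨hga, hgb, hg3⟩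
    have hfa : f a = m a := by
      have := hg a ha; rw [hga] at this; linarith
    have hfb : f b = m b := by
      have := hg b hb; rw [hgb] at this; linarith
    -- running min is constant on [a, b)
    have hconst : ∀ t ∈ Set.Ico a b, m t = m a := by
      rintro t ⟨hat, htb⟩
      have ht0 : (0:ℝ) ≤ t := ha.trans hat
      refine le_antisymm (hmono a t ha hat) ?_
      by_contra h
      push_neg at h
      obtain ⟨s, hs, hfs⟩ := hmem t ht0
      have hfs' : f s = m t := hfs
      have hsa : a < s := by
        by_contra hsa
        push_neg at hsa
        have := hle a ha s ⟨hs.1, hsa⟩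
        rw [hfs'] at this
        linarith
      have hsab : s ∈ Set.Ioo a b := ⟨hsa, lt_of_le_of_lt hs.2 htb⟩
      have hgs := hg3 s hsab
      rw [hg s (ha.trans hsa.le)] at hgs
      have h1 : m t ≤ m s := hmono s t (ha.trans hsa.le) hs.2
      have hms : sInf (f '' Set.Icc 0 s) = m s := rfl
      linarith
    have hmain : ∀ t ∈ Set.Ioo a b, f a < f t := by
      rintro t ⟨hat, htb⟩
      have hgt := hg3 t ⟨hat, htb⟩
      rw [hg t (ha.trans hat.le)] at hgt
      have := hconst t ⟨hat.le, htb⟩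
      rw [hfa]
      linarith
    -- f b ≥ f a by continuity from the left
    have hfb_ge : f a ≤ f b := by
      have hcw : ContinuousWithinAt f (Set.Ioo a b) b :=
        (hf b hb).mono (fun y hy => ha.trans hy.1.le)
      haveI : (nhdsWithin b (Set.Ioo a b)).NeBot := right_nhdsWithin_Ioo_neBot hab
      refine ge_of_tendsto hcw.tendsto ?_
      filter_upwards [self_mem_nhdsWithin] with t ht
      exact (hmain t ht).le
    have hfb_le : f b ≤ f a := by
      rw [hfa, hfb]; exact hmono a b ha hab.le
    have hfab : f a = f b := le_antisymm hfb_ge hfb_le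
    exact ⟨hfab, by rw [hfab, hfb], hmain⟩
  · rintro ⟨hfab, hfa, h3⟩
    have hma : m a = f a := by
      have h1 : m b ≤ m a := hmono a b ha hab.le
      have h2 : m a ≤ f a := hle a ha a ⟨ha, le_rfl⟩
      have hb' : m b = sInf (f '' Set.Icc 0 b) := rfl
      linarith
    have hra : sInf (f '' Set.Icc 0 a) = m a := rfl
    have hrb : sInf (f '' Set.Icc 0 b) = m b := rfl
    refine ⟨by rw [hg a ha, hra, hma]; ring, by rw [hg b hb, ← hfa, hfab]; ring, ?_⟩
    rintro t ⟨hat, htb⟩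
    have ht0 : (0:ℝ) ≤ t := ha.trans hat.le
    rw [hg t ht0]
    have h1 : m t ≤ m a := hmono a t ha hat.le
    have h2 := h3 t ⟨hat, htb⟩
    rw [hma] at h1
    linarith
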